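/- Let N be a quantum channel on d×d complex matrices and γ a positive-definite density matrix with N(γ) positive definite, with orthonormal eigenbases γ = ∑_i r_i |i⟩⟨i| and N(γ) = ∑_{k'} r'_{k'} |k'⟩⟨k'| (all r_i, r'_{k'} > 0). Suppose N is covariant with respect to γ, i.e., for every real θ and every matrix X: N(γ^{iθ} X γ^{−iθ}) = N(γ)^{iθ} N(X) N(γ)^{−iθ}. Then the transition amplitude T_{ij→k'l'} = ⟨k'| N(|i⟩⟨j|) |l'⟩ vanishes whenever r_j r'_{k'} ≠ r_i r'_{l'}; i.e., only transitions with vanishing imaginary information exchange (log(r_i/r_j) = log(r'_{k'}/r'_{l'})) have nonzero amplitude, so the quantum entropy production of a covariant channel has no imaginary part. -/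

import Mathlib

open Matrix
open scoped ComplexOrder

/-- ⟨v|A|w⟩ -/
noncomputable def braket {d : ℕ} (v : Fin d → ℂ) (A : Matrix (Fin d) (Fin d) ℂ)
    (w : Fin d → ℂ) : ℂ :=
  dotProduct (star v) (A.mulVec w)

/-- |v⟩⟨w| -/
noncomputable def ketbra {d : ℕ} (v w : Fin d → ℂ) : Matrix (Fin d) (Fin d) ℂ :=
  Matrix.vecMulVec v (star w)

/-- A quantum channel in Kraus form: N(X) = ∑ m, K m * X * (K m)ᴴ. -/
noncomputable def krausMap {d : ℕ} {ι : Type} [Fintype ι] (K : ι → Matrix (Fin d) (Fin d) ℂ)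
    (X : Matrix (Fin d) (Fin d) ℂ) : Matrix (Fin d) (Fin d) ℂ :=
  ∑ m, K m * X * (K m)ᴴ

/-- The adjoint map: N†(X) = ∑ m, (K m)ᴴ * X * K m. -/
noncomputable def krausAdj {d : ℕ} {ι : Type} [Fintype ι] (K : ι → Matrix (Fin d) (Fin d) ℂ)
    (X : Matrix (Fin d) (Fin d) ℂ) : Matrix (Fin d) (Fin d) ℂ :=
  ∑ m, (K m)ᴴ * X * K m

/-- An orthonormal family of vectors in ℂ^d. -/
def IsONB {d : ℕ} (e : Fin d → Fin d → ℂ) : Prop :=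
  ∀ i j, dotProduct (star (e i)) (e j) = if i = j then 1 else 0

/-- For A = ∑ i, r i • |e i⟩⟨e i| with `e` orthonormal and `r` positive, the complex
matrix power A^z = exp (z log A) is given by A^z = ∑ i, (r i)^z • |e i⟩⟨e i|. -/
noncomputable def projPow {d : ℕ} (r : Fin d → ℝ) (e : Fin d → Fin d → ℂ) (z : ℂ) :
    Matrix (Fin d) (Fin d) ℂ :=
  ∑ i, ((r i : ℂ) ^ z) • ketbra (e i) (e i)

lemma ketbra_mul_ketbra {d : ℕ} (v w x y : Fin d → ℂ) :
    ketbra v w * ketbra x y = (dotProduct (star w) x) • ketbra v y := by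
  ext a b
  simp only [ketbra, Matrix.mul_apply, Matrix.vecMulVec_apply, Matrix.smul_apply,
    dotProduct, smul_eq_mul, Finset.sum_mul]
  apply Finset.sum_congr rfl
  intros; ring

lemma projPow_mul_ketbra {d : ℕ} {r : Fin d → ℝ} {e : Fin d → Fin d → ℂ} (he : IsONB e)
    (z : ℂ) (i : Fin d) (w : Fin d → ℂ) :
    projPow r e z * ketbra (e i) w = ((r i : ℂ) ^ z) • ketbra (e i) w := by
  unfold projPow
  rw [Finset.sum_mul]
  rw [Finset.sum_eq_single i]
  · rw [smul_mul_assoc, ketbra_mul_ketbra, he i i]; simp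
  · intro b _ hb
    rw [smul_mul_assoc, ketbra_mul_ketbra, he b i, if_neg hb]; simp
  · simp

lemma ketbra_mul_projPow {d : ℕ} {r : Fin d → ℝ} {e : Fin d → Fin d → ℂ} (he : IsONB e)
    (z : ℂ) (j : Fin d) (v : Fin d → ℂ) :
    ketbra v (e j) * projPow r e z = ((r j : ℂ) ^ z) • ketbra v (e j) := by
  unfold projPow
  rw [Finset.mul_sum]
  rw [Finset.sum_eq_single j]
  · rw [mul_smul_comm, ketbra_mul_ketbra, he j j]; simp
  · intro b _ hb
    rw [mul_smul_comm, ketbra_mul_ketbra, he j b, if_neg (Ne.symm hb)]; simp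
  · simp

lemma my_sum_mulVec {d : ℕ} {α : Type*} (s : Finset α) (M : α → Matrix (Fin d) (Fin d) ℂ)
    (v : Fin d → ℂ) : (∑ i ∈ s, M i) *ᵥ v = ∑ i ∈ s, (M i) *ᵥ v := by
  ext a
  simp [Matrix.mulVec, dotProduct, Finset.sum_apply, Matrix.sum_apply, Finset.sum_mul]
  rw [Finset.sum_comm]

lemma my_vecMul_sum {d : ℕ} {α : Type*} (s : Finset α) (M : α → Matrix (Fin d) (Fin d) ℂ)
    (v : Fin d → ℂ) : v ᵥ* (∑ i ∈ s, M i) = ∑ i ∈ s, v ᵥ* (M i) := by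
  ext a
  simp [Matrix.vecMul, dotProduct, Finset.sum_apply, Matrix.sum_apply, Finset.mul_sum]
  rw [Finset.sum_comm]

lemma ketbra_mulVec {d : ℕ} (v w u : Fin d → ℂ) :
    ketbra v w *ᵥ u = (dotProduct (star w) u) • v := by
  ext a
  simp only [ketbra, Matrix.mulVec, Matrix.vecMulVec_apply, dotProduct, Pi.smul_apply,
    smul_eq_mul, Finset.sum_mul]
  apply Finset.sum_congr rfl
  intros; ring

lemma my_vecMul_smul {d : ℕ} (u : Fin d → ℂ) (c : ℂ) (M : Matrix (Fin d) (Fin d) ℂ) :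
    u ᵥ* (c • M) = c • (u ᵥ* M) := by
  ext a
  simp only [Matrix.vecMul, dotProduct, Matrix.smul_apply, Pi.smul_apply, smul_eq_mul,
    Finset.mul_sum]
  apply Finset.sum_congr rfl
  intros; ring

lemma vecMul_ketbra {d : ℕ} (u v w : Fin d → ℂ) :
    u ᵥ* ketbra v w = (dotProduct u v) • star w := by
  ext a
  simp only [ketbra, Matrix.vecMul, Matrix.vecMulVec_apply, dotProduct, Pi.smul_apply,
    smul_eq_mul, Pi.star_apply]
  rw [Finset.sum_mul]
  apply Finset.sum_congr rfl
  intros; ring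

lemma projPow_mulVec {d : ℕ} {r : Fin d → ℝ} {f : Fin d → Fin d → ℂ} (hf : IsONB f)
    (z : ℂ) (l : Fin d) :
    (projPow r f z) *ᵥ f l = ((r l : ℂ) ^ z) • f l := by
  unfold projPow
  rw [my_sum_mulVec]
  rw [Finset.sum_eq_single l]
  · rw [Matrix.smul_mulVec, ketbra_mulVec, hf l l]; simp
  · intro b _ hb
    rw [Matrix.smul_mulVec, ketbra_mulVec, hf b l, if_neg hb]; simp
  · simp

lemma star_vecMul_projPow {d : ℕ} {r : Fin d → ℝ} {f : Fin d → Fin d → ℂ} (hf : IsONB f)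
    (z : ℂ) (k : Fin d) :
    (star (f k)) ᵥ* (projPow r f z) = ((r k : ℂ) ^ z) • star (f k) := by
  unfold projPow
  rw [my_vecMul_sum]
  rw [Finset.sum_eq_single k]
  · rw [my_vecMul_smul, vecMul_ketbra, hf k k]; simp
  · intro b _ hb
    rw [my_vecMul_smul, vecMul_ketbra, hf k b, if_neg (Ne.symm hb)]; simp
  · simp

lemma krausMap_smul {d : ℕ} {ι : Type} [Fintype ι] (K : ι → Matrix (Fin d) (Fin d) ℂ)
    (c : ℂ) (X : Matrix (Fin d) (Fin d) ℂ) :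
    krausMap K (c • X) = c • krausMap K X := by
  unfold krausMap
  rw [Finset.smul_sum]
  apply Finset.sum_congr rfl
  intros
  rw [Matrix.mul_smul, Matrix.smul_mul]

lemma braket_smul {d : ℕ} (v w : Fin d → ℂ) (c : ℂ) (M : Matrix (Fin d) (Fin d) ℂ) :
    braket v (c • M) w = c * braket v M w := by
  simp [braket, Matrix.smul_mulVec, dotProduct_smul]

lemma braket_projPow_conj {d : ℕ} {r' : Fin d → ℝ} {f : Fin d → Fin d → ℂ} (hf : IsONB f)
    (z1 z2 : ℂ) (M : Matrix (Fin d) (Fin d) ℂ) (k l : Fin d) :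
    braket (f k) (projPow r' f z1 * M * projPow r' f z2) (f l)
      = (r' k : ℂ) ^ z1 * (r' l : ℂ) ^ z2 * braket (f k) M (f l) := by
  unfold braket
  rw [mul_assoc, ← Matrix.mulVec_mulVec, Matrix.dotProduct_mulVec, star_vecMul_projPow hf,
    ← Matrix.mulVec_mulVec, projPow_mulVec hf, Matrix.mulVec_smul, smul_dotProduct,
    dotProduct_smul]
  simp [Matrix.dotProduct_mulVec, mul_assoc]

lemma cpow_pos_eq (x : ℝ) (hx : 0 < x) (z : ℂ) :
    (x : ℂ) ^ z = Complex.exp (z * (Real.log x : ℂ)) := by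
  rw [Complex.cpow_def_of_ne_zero (by exact_mod_cast hx.ne'), Complex.ofReal_log hx.le,
    mul_comm]

/-- for a covariant channel (w.r.t. the reference state γ), the transition
amplitude T_{ij→k'l'} = ⟨k'|N(|i⟩⟨j|)|l'⟩ vanishes whenever r_j r'_k ≠ r_i r'_l, i.e. only
transitions with vanishing imaginary information exchange have nonzero amplitude. -/
theorem covariant_channel_no_imaginary_entropy_production
    {d : ℕ} {ι : Type} [Fintype ι] (K : ι → Matrix (Fin d) (Fin d) ℂ)
    (hK : ∑ m, (K m)ᴴ * K m = 1)
    (r : Fin d → ℝ) (e : Fin d → Fin d → ℂ) (hr : ∀ i, 0 < r i) (he : IsONB e)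
    (hrtr : ∑ i, r i = 1)
    (r' : Fin d → ℝ) (f : Fin d → Fin d → ℂ) (hr' : ∀ k, 0 < r' k) (hf : IsONB f)
    (hNγ : krausMap K (∑ i, ((r i : ℂ)) • ketbra (e i) (e i)) =
      ∑ k, ((r' k : ℂ)) • ketbra (f k) (f k))
    (hcov : ∀ θ : ℝ, ∀ X : Matrix (Fin d) (Fin d) ℂ,
      krausMap K (projPow r e (θ * Complex.I) * X * projPow r e (-(θ * Complex.I))) =
        projPow r' f (θ * Complex.I) * krausMap K X * projPow r' f (-(θ * Complex.I))) :
    ∀ i j k l : Fin d, r j * r' k ≠ r i * r' l →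
      braket (f k) (krausMap K (ketbra (e i) (e j))) (f l) = 0 := by
  intro i j k l hrl
  by_contra hT
  set T := braket (f k) (krausMap K (ketbra (e i) (e j))) (f l) with hTdef
  have key : ∀ θ : ℝ,
      ((r i : ℂ) ^ ((θ : ℂ) * Complex.I) * (r j : ℂ) ^ (-((θ : ℂ) * Complex.I)))
        = ((r' k : ℂ) ^ ((θ : ℂ) * Complex.I) * (r' l : ℂ) ^ (-((θ : ℂ) * Complex.I))) := by
    intro θ
    have h := hcov θ (ketbra (e i) (e j))
    rw [projPow_mul_ketbra he, smul_mul_assoc, ketbra_mul_projPow he, smul_smul,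
      krausMap_smul] at h
    have hb := congrArg (fun M => braket (f k) M (f l)) h
    simp only [braket_smul, braket_projPow_conj hf] at hb
    exact mul_right_cancel₀ hT hb
  set a : ℝ := Real.log (r i) - Real.log (r j) - Real.log (r' k) + Real.log (r' l) with ha
  have key2 : ∀ θ : ℝ, Complex.exp ((θ : ℂ) * Complex.I * (a : ℂ)) = 1 := by
    intro θ
    have h := key θ
    rw [cpow_pos_eq _ (hr i), cpow_pos_eq _ (hr j), cpow_pos_eq _ (hr' k),
      cpow_pos_eq _ (hr' l), ← Complex.exp_add, ← Complex.exp_add] at h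
    have h2 : Complex.exp ((θ : ℂ) * Complex.I * (a : ℂ)) =
        Complex.exp ((θ : ℂ) * Complex.I * (Real.log (r i) : ℂ)
            + -((θ : ℂ) * Complex.I) * (Real.log (r j) : ℂ)) /
          Complex.exp ((θ : ℂ) * Complex.I * (Real.log (r' k) : ℂ)
            + -((θ : ℂ) * Complex.I) * (Real.log (r' l) : ℂ)) := by
      rw [← Complex.exp_sub]
      congr 1
      rw [ha]
      push_cast
      ring
    rw [h2, h, div_self (Complex.exp_ne_zero _)]
  have haz : a = 0 := by
    by_contra han
    have h := key2 (Real.pi / a)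
    have hac : (a : ℂ) ≠ 0 := by exact_mod_cast han
    rw [show ((Real.pi / a : ℝ) : ℂ) * Complex.I * (a : ℂ)
        = (Real.pi : ℂ) * Complex.I by push_cast; field_simp] at h
    rw [Complex.exp_pi_mul_I] at h
    norm_num at h
  have hlog : Real.log (r i * r' l) = Real.log (r j * r' k) := by
    rw [Real.log_mul (hr i).ne' (hr' l).ne', Real.log_mul (hr j).ne' (hr' k).ne']
    linarith [ha ▸ haz]
  have : r i * r' l = r j * r' k := by
    have h1 := Real.exp_log (mul_pos (hr i) (hr' l))
    have h2 := Real.exp_log (mul_pos (hr j) (hr' k))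
    rw [← h1, ← h2, hlog]
  exact hrl this.symm
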